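/- If Ω ∈ Λ³V* satisfies Ω = α + β = α' + β' where α, β, α', β' are decomposable 3-forms with α ∧ β ≠ 0 and α' ∧ β' ≠ 0, then the unordered pairs coincide: either (α', β') = (α, β) or (α', β') = (β, α). -/

import Mathlib

open scoped TensorProduct

noncomputable section

/-- The wedge product of alternating forms valued in a commutative algebra,
obtained from `AlternatingMap.domCoprod` (the sum over shuffles, so that the
wedge of covectors is given by a determinant). -/
def wedge {R A M : Type*} [CommRing R] [CommRing A] [Algebra R A]
    [AddCommGroup M] [Module R M] {m n : ℕ}
    (α : AlternatingMap R M A (Fin m)) (β : AlternatingMap R M A (Fin n)) :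
    AlternatingMap R M A (Fin (m + n)) :=
  (LinearMap.mul' R A).compAlternatingMap
    ((α.domCoprod β).domDomCongr finSumFinEquiv)

/-- A linear map regarded as an alternating 1-form. -/
def oneForm {R A M : Type*} [CommRing R] [CommRing A] [Algebra R A]
    [AddCommGroup M] [Module R M] (ξ : M →ₗ[R] A) : AlternatingMap R M A (Fin 1) :=
  AlternatingMap.ofSubsingleton R M A 0 ξ

/-- A 3-form is decomposable if it is the wedge of three covectors. -/
def IsDecomposable {R A M : Type*} [CommRing R] [CommRing A] [Algebra R A]
    [AddCommGroup M] [Module R M] (α : AlternatingMap R M A (Fin 3)) : Prop :=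
  ∃ ξ₁ ξ₂ ξ₃ : M →ₗ[R] A,
    α = wedge (oneForm ξ₁) (wedge (oneForm ξ₂) (oneForm ξ₃))

/-! ### Auxiliary lemmas -/

section Bil

variable {R A M : Type*} [CommRing R] [CommRing A] [Algebra R A]
    [AddCommGroup M] [Module R M] {m n : ℕ}

lemma AlternatingMap.sum_apply' {ι κ N : Type*} [AddCommMonoid N] [Module R N] (s : Finset κ)
    (f : κ → AlternatingMap R M N ι) (v : ι → M) :
    (∑ i ∈ s, f i) v = ∑ i ∈ s, f i v := by
  induction s using Finset.cons_induction <;> simp [*]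

lemma domDomCongr_add' {ι ι' N : Type*} [AddCommMonoid N] [Module R N] (σ : ι ≃ ι')
    (f g : AlternatingMap R M N ι) :
    (f + g).domDomCongr σ = f.domDomCongr σ + g.domDomCongr σ := by
  ext v; simp [AlternatingMap.domDomCongr_apply]

lemma domDomCongr_smul' {ι ι' N : Type*} [AddCommMonoid N] [Module R N] (σ : ι ≃ ι') (r : R)
    (f : AlternatingMap R M N ι) :
    (r • f).domDomCongr σ = r • f.domDomCongr σ := by
  ext v; simp [AlternatingMap.domDomCongr_apply]

lemma compAlternatingMap_add' {ι N N₂ : Type*} [AddCommMonoid N] [Module R N]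
    [AddCommMonoid N₂] [Module R N₂] (g : N →ₗ[R] N₂) (f₁ f₂ : AlternatingMap R M N ι) :
    g.compAlternatingMap (f₁ + f₂) = g.compAlternatingMap f₁ + g.compAlternatingMap f₂ := by
  ext v; simp

lemma compAlternatingMap_smul' {ι N N₂ : Type*} [AddCommMonoid N] [Module R N]
    [AddCommMonoid N₂] [Module R N₂] (g : N →ₗ[R] N₂) (r : R) (f : AlternatingMap R M N ι) :
    g.compAlternatingMap (r • f) = r • g.compAlternatingMap f := by
  ext v; simp

lemma wedge_add_left (a b : AlternatingMap R M A (Fin m)) (c : AlternatingMap R M A (Fin n)) :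
    wedge (a + b) c = wedge a c + wedge b c := by
  unfold wedge
  rw [← AlternatingMap.domCoprod'_apply, TensorProduct.add_tmul, map_add,
    AlternatingMap.domCoprod'_apply, AlternatingMap.domCoprod'_apply,
    domDomCongr_add', compAlternatingMap_add']

lemma wedge_add_right (a : AlternatingMap R M A (Fin m)) (b c : AlternatingMap R M A (Fin n)) :
    wedge a (b + c) = wedge a b + wedge a c := by
  unfold wedge
  rw [← AlternatingMap.domCoprod'_apply, TensorProduct.tmul_add, map_add,
    AlternatingMap.domCoprod'_apply, AlternatingMap.domCoprod'_apply,
    domDomCongr_add', compAlternatingMap_add']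

lemma wedge_smul_left (r : R) (a : AlternatingMap R M A (Fin m))
    (c : AlternatingMap R M A (Fin n)) :
    wedge (r • a) c = r • wedge a c := by
  unfold wedge
  rw [← AlternatingMap.domCoprod'_apply, ← TensorProduct.smul_tmul', map_smul,
    AlternatingMap.domCoprod'_apply, domDomCongr_smul', compAlternatingMap_smul']

lemma wedge_smul_right (r : R) (a : AlternatingMap R M A (Fin m))
    (c : AlternatingMap R M A (Fin n)) :
    wedge a (r • c) = r • wedge a c := by
  unfold wedge
  rw [← AlternatingMap.domCoprod'_apply, TensorProduct.tmul_smul, map_smul,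
    AlternatingMap.domCoprod'_apply, domDomCongr_smul', compAlternatingMap_smul']

lemma wedge_zero_left (c : AlternatingMap R M A (Fin n)) :
    wedge (0 : AlternatingMap R M A (Fin m)) c = 0 := by
  have := wedge_smul_left (0 : R) (0 : AlternatingMap R M A (Fin m)) c
  simpa using this

lemma wedge_zero_right (a : AlternatingMap R M A (Fin m)) :
    wedge a (0 : AlternatingMap R M A (Fin n)) = 0 := by
  have := wedge_smul_right (0 : R) a (0 : AlternatingMap R M A (Fin n))
  simpa using this

lemma wedge_sum_left {κ : Type*} (s : Finset κ) (f : κ → AlternatingMap R M A (Fin m))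
    (c : AlternatingMap R M A (Fin n)) :
    wedge (∑ i ∈ s, f i) c = ∑ i ∈ s, wedge (f i) c := by
  induction s using Finset.cons_induction with
  | empty => simpa using wedge_zero_left c
  | cons i s his ih => rw [Finset.sum_cons, Finset.sum_cons, wedge_add_left, ih]

lemma wedge_sum_right {κ : Type*} (s : Finset κ) (a : AlternatingMap R M A (Fin m))
    (g : κ → AlternatingMap R M A (Fin n)) :
    wedge a (∑ i ∈ s, g i) = ∑ i ∈ s, wedge a (g i) := by
  induction s using Finset.cons_induction with
  | empty => simpa using wedge_zero_right a
  | cons i s his ih => rw [Finset.sum_cons, Finset.sum_cons, wedge_add_right, ih]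

end Bil

section DetForm

variable {V : Type*} [AddCommGroup V] [Module ℂ V]

/-- The product of covectors, as a multilinear map. -/
def prodForm {n : ℕ} (θ : Fin n → (V →ₗ[ℂ] ℂ)) : MultilinearMap ℂ (fun _ : Fin n => V) ℂ :=
  (MultilinearMap.mkPiAlgebra ℂ (Fin n) ℂ).compLinearMap θ

lemma prodForm_apply {n : ℕ} (θ : Fin n → (V →ₗ[ℂ] ℂ)) (v : Fin n → V) :
    prodForm θ v = ∏ i, θ i (v i) := by simp [prodForm]

/-- The wedge of a family of covectors (given by a determinant). -/
def detForm {n : ℕ} (θ : Fin n → (V →ₗ[ℂ] ℂ)) : AlternatingMap ℂ V ℂ (Fin n) :=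
  MultilinearMap.alternatization (prodForm θ)

lemma detForm_apply {n : ℕ} (θ : Fin n → (V →ₗ[ℂ] ℂ)) (v : Fin n → V) :
    detForm θ v = Matrix.det (Matrix.of fun i j => θ j (v i)) := by
  rw [detForm, MultilinearMap.alternatization_apply, Matrix.det_apply]
  refine Finset.sum_congr rfl fun σ _ => ?_
  rw [MultilinearMap.domDomCongr_apply]
  simp [prodForm]

lemma wedge_detForm {m n : ℕ} (θ : Fin m → (V →ₗ[ℂ] ℂ)) (φ : Fin n → (V →ₗ[ℂ] ℂ)) :
    wedge (detForm θ) (detForm φ) = detForm (Fin.append θ φ) := by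
  ext v
  rw [wedge, LinearMap.compAlternatingMap_apply, AlternatingMap.domDomCongr_apply]
  rw [detForm, detForm, ← MultilinearMap.domCoprod_alternization]
  rw [detForm, MultilinearMap.alternatization_apply, MultilinearMap.alternatization_apply,
    map_sum]
  refine (Fintype.sum_equiv (Equiv.permCongr finSumFinEquiv) _ _ ?_)
  intro σ
  rw [Equiv.Perm.sign_permCongr] at *
  rw [Units.smul_def, Units.smul_def, map_zsmul]
  congr 1
  rw [MultilinearMap.domDomCongr_apply, MultilinearMap.domDomCongr_apply,
    MultilinearMap.domCoprod_apply, LinearMap.mul'_apply]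
  rw [prodForm_apply, prodForm_apply, prodForm_apply,
    ← Equiv.prod_comp finSumFinEquiv
      (fun k => Fin.append θ φ k (v ((finSumFinEquiv.permCongr σ) k))),
    Fintype.prod_sum_type]
  congr 1
  · refine Finset.prod_congr rfl fun i _ => ?_
    simp [Equiv.permCongr_apply, Fin.append_left]
  · refine Finset.prod_congr rfl fun j _ => ?_
    simp [Equiv.permCongr_apply, Fin.append_right]

lemma oneForm_eq_detForm (ξ : V →ₗ[ℂ] ℂ) : oneForm ξ = detForm ![ξ] := by
  ext v
  rw [detForm_apply]
  rw [show (Matrix.of fun i j => (![ξ] j) (v i)) = ![![ξ (v 0)]] by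
    ext i j; fin_cases i <;> fin_cases j <;> rfl]
  simp [oneForm, Matrix.det_fin_one]
  exact (Matrix.det_fin_one (![![ξ (v 0)]] : Matrix (Fin 1) (Fin 1) ℂ)).symm

lemma isDecomposable_detForm (α : AlternatingMap ℂ V ℂ (Fin 3)) (h : IsDecomposable α) :
    ∃ ξ : Fin 3 → (V →ₗ[ℂ] ℂ), α = detForm ξ := by
  obtain ⟨ξ₁, ξ₂, ξ₃, rfl⟩ := h
  refine ⟨![ξ₁, ξ₂, ξ₃], ?_⟩
  rw [oneForm_eq_detForm, oneForm_eq_detForm, oneForm_eq_detForm, wedge_detForm, wedge_detForm]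
  congr 1
  funext i
  fin_cases i <;> simp [Fin.append, Fin.addCases]

lemma detForm_eq_zero_of_eq {n : ℕ} (θ : Fin n → (V →ₗ[ℂ] ℂ)) {i j : Fin n}
    (hij : i ≠ j) (h : θ i = θ j) : detForm θ = 0 := by
  ext v
  rw [detForm_apply]
  exact Matrix.det_zero_of_column_eq hij fun k => by simp [h]

lemma detForm_eq_zero_of_not_linearIndependent {n : ℕ} (θ : Fin n → (V →ₗ[ℂ] ℂ))
    (h : ¬ LinearIndependent ℂ θ) : detForm θ = 0 := by
  rw [Fintype.not_linearIndependent_iff] at h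
  obtain ⟨g, hg, i₀, hi₀⟩ := h
  ext v
  rw [detForm_apply]
  refine Matrix.exists_mulVec_eq_zero_iff.mp ⟨g, ?_, ?_⟩
  · intro hg0; exact hi₀ (congrFun hg0 i₀)
  · funext k
    have := congrFun (congrArg (fun f => f.toFun) hg) (v k)
    simpa [Matrix.mulVec, dotProduct, mul_comm] using this

lemma detForm_apply_eq_zero_of_ker {n : ℕ} (θ : Fin n → (V →ₗ[ℂ] ℂ)) (x : Fin n → V)
    (p : Fin n) (h : ∀ q, θ q (x p) = 0) : detForm θ x = 0 := by
  rw [detForm_apply]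
  exact Matrix.det_eq_zero_of_row_eq_zero p fun q => by simp [h]

lemma detForm_comp_perm {n : ℕ} (θ : Fin n → (V →ₗ[ℂ] ℂ)) (σ : Equiv.Perm (Fin n)) :
    detForm (θ ∘ σ) = ((Equiv.Perm.sign σ : ℤ) : ℂ) • detForm θ := by
  ext v
  rw [AlternatingMap.smul_apply, detForm_apply, detForm_apply]
  have := Matrix.det_permute' σ (Matrix.of fun i j => θ j (v i))
  have h2 : ((Matrix.of fun i j => θ j (v i)).submatrix id σ)
      = Matrix.of fun i j => (θ ∘ σ) j (v i) := by
    ext i j; simp [Matrix.submatrix_apply]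
  rw [h2] at this
  rw [this, smul_eq_mul]

lemma curryLeft_detForm {n : ℕ} (θ : Fin (n + 1) → (V →ₗ[ℂ] ℂ)) (x : V) :
    (detForm θ).curryLeft x
      = ∑ i : Fin (n + 1), ((-1) ^ (i : ℕ) * θ i x) • detForm (θ ∘ i.succAbove) := by
  ext v
  rw [AlternatingMap.curryLeft_apply_apply]
  rw [detForm_apply, Matrix.det_succ_row_zero]
  rw [AlternatingMap.sum_apply']
  refine Finset.sum_congr rfl fun j _ => ?_
  rw [AlternatingMap.smul_apply, detForm_apply, smul_eq_mul]
  have h1 : Matrix.of (fun i j => (θ j) (Matrix.vecCons x v i)) 0 j = θ j x := by simp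
  have h2 : (Matrix.of (fun i j => (θ j) (Matrix.vecCons x v i))).submatrix Fin.succ j.succAbove
      = Matrix.of fun p q => (θ ∘ j.succAbove) q (v p) := by
    ext p q; simp [Matrix.submatrix_apply]
  rw [h1, h2]

end DetForm

section Char

variable {V : Type*} [AddCommGroup V] [Module ℂ V]

/-- The block swap permutation of `Fin (2+2)`. -/
def sw4 : Equiv.Perm (Fin (2 + 2)) := Equiv.swap 0 2 * Equiv.swap 1 3

/-- Index function selecting the evaluation arguments. -/
def idx4 (i j : Fin 3) : Fin (2 + 2) → Fin (3 + 3) :=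
  Fin.append (fun a => Fin.castAdd 3 (i.succAbove a)) (fun b => Fin.natAdd 3 (j.succAbove b))

lemma idx4_left (i j : Fin 3) (a : Fin 2) :
    idx4 i j (Fin.castAdd 2 a) = Fin.castAdd 3 (i.succAbove a) := Fin.append_left _ _ _

lemma idx4_right (i j : Fin 3) (b : Fin 2) :
    idx4 i j (Fin.natAdd 2 b) = Fin.natAdd 3 (j.succAbove b) := Fin.append_right _ _ _

lemma idx4_injective (i j : Fin 3) : Function.Injective (idx4 i j) := by
  intro p q h
  induction p using Fin.addCases with
  | left a =>
    induction q using Fin.addCases with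
    | left a' =>
      rw [idx4_left, idx4_left] at h
      have h2 : i.succAbove a = i.succAbove a' := by simpa [Fin.ext_iff] using h
      exact congrArg _ (Fin.succAbove_right_injective h2)
    | right b' =>
      rw [idx4_left, idx4_right] at h
      have := (i.succAbove a).isLt
      simp only [Fin.ext_iff, Fin.coe_castAdd, Fin.coe_natAdd] at h
      omega
  | right b =>
    induction q using Fin.addCases with
    | left a' =>
      rw [idx4_right, idx4_left] at h
      have := (i.succAbove a').isLt
      simp only [Fin.ext_iff, Fin.coe_castAdd, Fin.coe_natAdd] at h
      omega
    | right b' =>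
      rw [idx4_right, idx4_right] at h
      have h2 : j.succAbove b = j.succAbove b' := by simpa [Fin.ext_iff] using h
      exact congrArg _ (Fin.succAbove_right_injective h2)

lemma FG_eval (ξ η : Fin 3 → (V →ₗ[ℂ] ℂ)) (E : Module.Basis (Fin (3 + 3)) ℂ V)
    (hpair : ∀ j i, Fin.append ξ η j (E i) = if j = i then 1 else 0) (i j i' j' : Fin 3) :
    detForm (Fin.append (ξ ∘ i'.succAbove) (η ∘ j'.succAbove)) (fun p => E (idx4 i j p))
      = if i' = i ∧ j' = j then 1 else 0 := by
  rw [detForm_apply]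
  have hM : (Matrix.of fun p q =>
        (Fin.append (ξ ∘ i'.succAbove) (η ∘ j'.succAbove)) q (E (idx4 i j p)))
      = Matrix.of fun p q => if idx4 i' j' q = idx4 i j p then (1 : ℂ) else 0 := by
    ext p q
    have hfam : (Fin.append (ξ ∘ i'.succAbove) (η ∘ j'.succAbove)) q
        = Fin.append ξ η (idx4 i' j' q) := by
      induction q using Fin.addCases with
      | left a => rw [idx4_left, Fin.append_left, Fin.append_left]; rfl
      | right b => rw [idx4_right, Fin.append_right, Fin.append_right]; rfl
    simp only [Matrix.of_apply, hfam, hpair]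
  rw [hM]
  by_cases hcase : i' = i ∧ j' = j
  · obtain ⟨rfl, rfl⟩ := hcase
    rw [if_pos ⟨rfl, rfl⟩]
    have h1 : (Matrix.of fun p q => if idx4 i' j' q = idx4 i' j' p then (1 : ℂ) else 0)
        = (1 : Matrix (Fin (2 + 2)) (Fin (2 + 2)) ℂ) := by
      ext p q
      rw [Matrix.of_apply, Matrix.one_apply]
      by_cases hpq : p = q
      · subst hpq; simp
      · rw [if_neg (fun hc => hpq ((idx4_injective i' j' hc).symm)), if_neg hpq]
    rw [h1, Matrix.det_one]
  · rw [if_neg hcase]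
    have hne : i' ≠ i ∨ j' ≠ j := by tauto
    rcases hne with hne | hne
    · obtain ⟨a, ha⟩ := Fin.exists_succAbove_eq (show i ≠ i' from fun hc => hne hc.symm)
      apply Matrix.det_eq_zero_of_column_eq_zero (Fin.castAdd 2 a)
      intro p
      rw [Matrix.of_apply, if_neg]
      rw [idx4_left, ha]
      induction p using Fin.addCases with
      | left a' =>
        rw [idx4_left]
        intro hc
        have h2 : i = i.succAbove a' := by simpa [Fin.ext_iff] using hc
        exact Fin.succAbove_ne i a' h2.symm
      | right b' =>
        rw [idx4_right]
        have := i.isLt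
        simp only [Fin.ext_iff, Fin.coe_castAdd, Fin.coe_natAdd]
        omega
    · obtain ⟨b, hb⟩ := Fin.exists_succAbove_eq (show j ≠ j' from fun hc => hne hc.symm)
      apply Matrix.det_eq_zero_of_column_eq_zero (Fin.natAdd 2 b)
      intro p
      rw [Matrix.of_apply, if_neg]
      rw [idx4_right, hb]
      induction p using Fin.addCases with
      | left a' =>
        rw [idx4_left]
        have := (i.succAbove a').isLt
        simp only [Fin.ext_iff, Fin.coe_castAdd, Fin.coe_natAdd]
        omega
      | right b' =>
        rw [idx4_right]
        intro hc
        have h2 : j = j.succAbove b' := by simpa [Fin.ext_iff] using hc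
        exact Fin.succAbove_ne j b' h2.symm

lemma char_lemma (ξ η : Fin 3 → (V →ₗ[ℂ] ℂ)) (E : Module.Basis (Fin (3 + 3)) ℂ V)
    (hpair : ∀ j i, Fin.append ξ η j (E i) = if j = i then 1 else 0) (v : V) :
    wedge ((detForm ξ + detForm η).curryLeft v) ((detForm ξ + detForm η).curryLeft v) = 0
      ↔ ∀ i j : Fin 3, ξ i v * η j v = 0 := by
  classical
  set c : Fin 3 → ℂ := fun i => (-1) ^ (i : ℕ) * ξ i v with hc
  set d : Fin 3 → ℂ := fun j => (-1) ^ (j : ℕ) * η j v with hd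
  have hcurry : (detForm ξ + detForm η).curryLeft v
      = (∑ i, c i • detForm (ξ ∘ i.succAbove)) + (∑ j, d j • detForm (η ∘ j.succAbove)) := by
    rw [AlternatingMap.curryLeft_add, LinearMap.add_apply, curryLeft_detForm, curryLeft_detForm]
  have expand : ∀ {m' n' : ℕ} (cf df : Fin 3 → ℂ)
      (F : Fin 3 → AlternatingMap ℂ V ℂ (Fin m')) (G : Fin 3 → AlternatingMap ℂ V ℂ (Fin n')),
      wedge (∑ i, cf i • F i) (∑ j, df j • G j)
        = ∑ i, ∑ j, (cf i * df j) • wedge (F i) (G j) := by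
    intro m' n' cf df F G
    rw [wedge_sum_left]
    refine Finset.sum_congr rfl fun i _ => ?_
    rw [wedge_sum_right]
    refine Finset.sum_congr rfl fun j _ => ?_
    rw [wedge_smul_left, wedge_smul_right, smul_smul]
  have hsq_zero : ∀ (θ : Fin 3 → (V →ₗ[ℂ] ℂ)) (i i' : Fin 3),
      detForm (V := V) (Fin.append (θ ∘ i.succAbove) (θ ∘ i'.succAbove)) = 0 := by
    intro θ i i'
    obtain ⟨k, hk1, hk2⟩ : ∃ k : Fin 3, k ≠ i ∧ k ≠ i' := by revert i i'; decide
    obtain ⟨a, ha⟩ := Fin.exists_succAbove_eq hk1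
    obtain ⟨b, hb⟩ := Fin.exists_succAbove_eq hk2
    refine detForm_eq_zero_of_eq _ (i := Fin.castAdd 2 a) (j := Fin.natAdd 2 b) ?_ ?_
    · have := a.isLt
      simp only [ne_eq, Fin.ext_iff, Fin.coe_castAdd, Fin.coe_natAdd]
      omega
    · rw [Fin.append_left, Fin.append_right]
      show θ (i.succAbove a) = θ (i'.succAbove b)
      rw [ha, hb]
  have hswap : ∀ i j : Fin 3,
      detForm (V := V) (Fin.append (η ∘ j.succAbove) (ξ ∘ i.succAbove))
        = detForm (Fin.append (ξ ∘ i.succAbove) (η ∘ j.succAbove)) := by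
    intro i j
    have hfam : Fin.append (η ∘ j.succAbove) (ξ ∘ i.succAbove)
        = (Fin.append (ξ ∘ i.succAbove) (η ∘ j.succAbove)) ∘ sw4 := by
      funext q
      induction q using Fin.addCases with
      | left a =>
        have hsw : sw4 (Fin.castAdd 2 a) = Fin.natAdd 2 a := by revert a; decide
        show _ = Fin.append _ _ (sw4 (Fin.castAdd 2 a))
        rw [hsw, Fin.append_left, Fin.append_right]
      | right b =>
        have hsw : sw4 (Fin.natAdd 2 b) = Fin.castAdd 2 b := by revert b; decide
        show _ = Fin.append _ _ (sw4 (Fin.natAdd 2 b))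
        rw [hsw, Fin.append_right, Fin.append_left]
    rw [hfam, detForm_comp_perm]
    have : Equiv.Perm.sign sw4 = 1 := by decide
    rw [this]
    norm_num
  have hQ : wedge ((detForm ξ + detForm η).curryLeft v) ((detForm ξ + detForm η).curryLeft v)
      = ∑ i, ∑ j, (2 * (c i * d j)) •
          detForm (Fin.append (ξ ∘ i.succAbove) (η ∘ j.succAbove)) := by
    rw [hcurry, wedge_add_left, wedge_add_right, wedge_add_right,
      expand, expand, expand, expand]
    have t1 : (∑ i, ∑ j, (c i * c j) •
        wedge (detForm (V := V) (ξ ∘ i.succAbove)) (detForm (ξ ∘ j.succAbove))) = 0 := by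
      refine Finset.sum_eq_zero fun i _ => Finset.sum_eq_zero fun j _ => ?_
      rw [wedge_detForm, hsq_zero, smul_zero]
    have t4 : (∑ i, ∑ j, (d i * d j) •
        wedge (detForm (V := V) (η ∘ i.succAbove)) (detForm (η ∘ j.succAbove))) = 0 := by
      refine Finset.sum_eq_zero fun i _ => Finset.sum_eq_zero fun j _ => ?_
      rw [wedge_detForm, hsq_zero, smul_zero]
    rw [t1, t4, zero_add, add_zero]
    have t3 : (∑ j, ∑ i, (d j * c i) •
        wedge (detForm (V := V) (η ∘ j.succAbove)) (detForm (ξ ∘ i.succAbove)))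
        = ∑ i, ∑ j, (c i * d j) •
            detForm (Fin.append (ξ ∘ i.succAbove) (η ∘ j.succAbove)) := by
      rw [Finset.sum_comm]
      refine Finset.sum_congr rfl fun i _ => Finset.sum_congr rfl fun j _ => ?_
      rw [wedge_detForm, hswap, mul_comm]
    rw [t3, ← Finset.sum_add_distrib]
    refine Finset.sum_congr rfl fun i _ => ?_
    rw [← Finset.sum_add_distrib]
    refine Finset.sum_congr rfl fun j _ => ?_
    rw [wedge_detForm, ← add_smul]
    congr 1
    ring
  constructor
  · intro hQ0 i j
    rw [hQ] at hQ0
    have hx := congrArg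
      (fun Φ : AlternatingMap ℂ V ℂ (Fin (2 + 2)) => Φ fun p => E (idx4 i j p)) hQ0
    simp only [AlternatingMap.sum_apply', AlternatingMap.smul_apply,
      AlternatingMap.zero_apply] at hx
    have hval : ∀ i' j' : Fin 3, (2 * (c i' * d j')) •
        detForm (Fin.append (ξ ∘ i'.succAbove) (η ∘ j'.succAbove)) (fun p => E (idx4 i j p))
          = if i' = i ∧ j' = j then 2 * (c i * d j) else 0 := by
      intro i' j'
      rw [FG_eval ξ η E hpair]
      by_cases hc2 : i' = i ∧ j' = j
      · obtain ⟨rfl, rfl⟩ := hc2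
        rw [if_pos ⟨rfl, rfl⟩, if_pos ⟨rfl, rfl⟩, smul_eq_mul, mul_one]
      · rw [if_neg hc2, if_neg hc2, smul_zero]
    rw [Finset.sum_congr rfl fun i' _ => Finset.sum_congr rfl fun j' _ => hval i' j'] at hx
    have hsum : (∑ i' : Fin 3, ∑ j' : Fin 3,
        if i' = i ∧ j' = j then 2 * (c i * d j) else 0) = 2 * (c i * d j) := by
      rw [Finset.sum_eq_single_of_mem i (Finset.mem_univ i) ?_]
      · rw [Finset.sum_eq_single_of_mem j (Finset.mem_univ j) ?_]
        · simp
        · intro b _ hb; simp [hb]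
      · intro b _ hb
        refine Finset.sum_eq_zero fun j' _ => ?_
        simp [hb]
    rw [hsum] at hx
    have h2 : 2 * (c i * d j) = 0 := hx
    have h3 : ((-1 : ℂ)) ^ ((i : ℕ) + (j : ℕ)) * (ξ i v * η j v) = c i * d j := by
      rw [hc, hd, pow_add]; ring
    have h4 : c i * d j = 0 := by
      have : (2 : ℂ) ≠ 0 := by norm_num
      exact (mul_eq_zero.mp h2).resolve_left this
    rw [h4] at h3
    have h5 : ((-1 : ℂ)) ^ ((i : ℕ) + (j : ℕ)) ≠ 0 := by
      apply pow_ne_zero; norm_num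
    exact (mul_eq_zero.mp h3).resolve_left h5
  · intro hprod
    rw [hQ]
    refine Finset.sum_eq_zero fun i _ => Finset.sum_eq_zero fun j _ => ?_
    have : c i * d j = 0 := by
      have h3 : c i * d j = ((-1 : ℂ)) ^ ((i : ℕ) + (j : ℕ)) * (ξ i v * η j v) := by
        rw [hc, hd, pow_add]; ring
      rw [h3, hprod, mul_zero]
    rw [this, mul_zero, zero_smul]

end Char

section Main

variable {V : Type*} [AddCommGroup V] [Module ℂ V] [FiniteDimensional ℂ V]

lemma submodule_or (p q r : Submodule ℂ V) (h : ∀ v ∈ p, v ∈ q ∨ v ∈ r) : p ≤ q ∨ p ≤ r := by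
  by_contra hc
  push_neg at hc
  obtain ⟨⟨x, hx, hxq⟩, ⟨y, hy, hyr⟩⟩ := And.intro (SetLike.not_le_iff_exists.mp hc.1)
    (SetLike.not_le_iff_exists.mp hc.2)
  have hxr : x ∈ r := (h x hx).resolve_left hxq
  have hyq : y ∈ q := (h y hy).resolve_right hyr
  rcases h (x + y) (add_mem hx hy) with hq | hr
  · exact hxq (by simpa using sub_mem hq hyq)
  · exact hyr (by simpa using sub_mem hr hxr)

/-- Common kernel of a triple of covectors. -/
def Kof (θ : Fin 3 → (V →ₗ[ℂ] ℂ)) : Submodule ℂ V := ⨅ i, LinearMap.ker (θ i)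

lemma mem_Kof {θ : Fin 3 → (V →ₗ[ℂ] ℂ)} {v : V} : v ∈ Kof θ ↔ ∀ i, θ i v = 0 := by
  simp [Kof]

lemma exists_good_basis (ξ η : Fin 3 → (V →ₗ[ℂ] ℂ)) (hdim : Module.finrank ℂ V = 6)
    (hb : LinearIndependent ℂ (Fin.append ξ η)) :
    ∃ E : Module.Basis (Fin (3 + 3)) ℂ V, ∀ j i, Fin.append ξ η j (E i) = if j = i then 1 else 0 := by
  have hcard : Fintype.card (Fin (3 + 3)) = Module.finrank ℂ (Module.Dual ℂ V) := by
    rw [Subspace.dual_finrank_eq, hdim, Fintype.card_fin]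
  let B := basisOfLinearIndependentOfCardEqFinrank hb hcard
  have hB : ⇑B = Fin.append ξ η := coe_basisOfLinearIndependentOfCardEqFinrank hb hcard
  refine ⟨B.dualBasis.map (Module.evalEquiv ℂ V).symm, fun j i => ?_⟩
  rw [Module.Basis.map_apply]
  calc Fin.append ξ η j ((Module.evalEquiv ℂ V).symm (B.dualBasis i))
      = B j ((Module.evalEquiv ℂ V).symm (B.dualBasis i)) := by rw [hB]
    _ = B.dualBasis i (B j) := Module.apply_evalEquiv_symm_apply ℂ V _ _
    _ = if j = i then 1 else 0 := B.dualBasis_apply_self i j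

lemma Kof_facts (ξ η : Fin 3 → (V →ₗ[ℂ] ℂ)) (E : Module.Basis (Fin (3 + 3)) ℂ V)
    (hpair : ∀ j i, Fin.append ξ η j (E i) = if j = i then 1 else 0) :
    Module.finrank ℂ (Kof ξ) = 3 ∧ Module.finrank ℂ (Kof η) = 3 ∧ Kof ξ ⊔ Kof η = ⊤ ∧
      (∀ t, (∀ i, ξ i (E t) = 0) ∨ (∀ i, η i (E t) = 0)) := by
  have hcoord : ∀ (j : Fin (3 + 3)) (w : V), Fin.append ξ η j w = E.repr w j := by
    intro j w
    have hlin : (Fin.append ξ η j : V →ₗ[ℂ] ℂ) = E.coord j := by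
      refine E.ext fun i => ?_
      rw [hpair, Module.Basis.coord_apply, Module.Basis.repr_self]
      simp [Finsupp.single_apply, eq_comm]
    rw [hlin, Module.Basis.coord_apply]
  have hηzero : ∀ (j : Fin 3) (i : Fin 3), η j (E (Fin.castAdd 3 i)) = 0 := by
    intro j i
    have := hpair (Fin.natAdd 3 j) (Fin.castAdd 3 i)
    rw [Fin.append_right] at this
    rw [this, if_neg]
    have := i.isLt
    simp only [Fin.ext_iff, Fin.coe_castAdd, Fin.coe_natAdd]
    omega
  have hξzero : ∀ (j : Fin 3) (k : Fin 3), ξ j (E (Fin.natAdd 3 k)) = 0 := by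
    intro j k
    have := hpair (Fin.castAdd 3 j) (Fin.natAdd 3 k)
    rw [Fin.append_left] at this
    rw [this, if_neg]
    have := j.isLt
    simp only [Fin.ext_iff, Fin.coe_castAdd, Fin.coe_natAdd]
    omega
  have hKξ : Kof ξ = Submodule.span ℂ (Set.range fun k : Fin 3 => E (Fin.natAdd 3 k)) := by
    apply le_antisymm
    · intro w hw
      rw [mem_Kof] at hw
      have hrepr : w = ∑ k : Fin 3, E.repr w (Fin.natAdd 3 k) • E (Fin.natAdd 3 k) := by
        conv_lhs => rw [← E.sum_repr w]
        rw [Fin.sum_univ_add]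
        have hz : ∀ i : Fin 3, E.repr w (Fin.castAdd 3 i) • E (Fin.castAdd 3 i) = (0 : V) := by
          intro i
          rw [← hcoord, Fin.append_left, hw i, zero_smul]
        rw [Finset.sum_congr rfl fun i _ => hz i]
        simp
      rw [hrepr]
      exact Submodule.sum_mem _ fun k _ =>
        Submodule.smul_mem _ _ (Submodule.subset_span ⟨k, rfl⟩)
    · rw [Submodule.span_le]
      rintro _ ⟨k, rfl⟩
      rw [SetLike.mem_coe, mem_Kof]
      intro i
      exact hξzero i k
  have hKη : Kof η = Submodule.span ℂ (Set.range fun i : Fin 3 => E (Fin.castAdd 3 i)) := by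
    apply le_antisymm
    · intro w hw
      rw [mem_Kof] at hw
      have hrepr : w = ∑ i : Fin 3, E.repr w (Fin.castAdd 3 i) • E (Fin.castAdd 3 i) := by
        conv_lhs => rw [← E.sum_repr w]
        rw [Fin.sum_univ_add]
        have hz : ∀ k : Fin 3, E.repr w (Fin.natAdd 3 k) • E (Fin.natAdd 3 k) = (0 : V) := by
          intro k
          rw [← hcoord, Fin.append_right, hw k, zero_smul]
        rw [Finset.sum_congr rfl fun k _ => hz k]
        simp
      rw [hrepr]
      exact Submodule.sum_mem _ fun k _ =>
        Submodule.smul_mem _ _ (Submodule.subset_span ⟨k, rfl⟩)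
    · rw [Submodule.span_le]
      rintro _ ⟨i, rfl⟩
      rw [SetLike.mem_coe, mem_Kof]
      intro j
      exact hηzero j i
  have hnatinj : Function.Injective (Fin.natAdd 3 : Fin 3 → Fin (3 + 3)) := by
    intro a b hab; simpa [Fin.ext_iff] using hab
  have hcastinj : Function.Injective (Fin.castAdd 3 : Fin 3 → Fin (3 + 3)) :=
    Fin.castAdd_injective _ _
  refine ⟨?_, ?_, ?_, ?_⟩
  · rw [hKξ, show (fun k : Fin 3 => E (Fin.natAdd 3 k)) = ⇑E ∘ Fin.natAdd 3 from rfl,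
      finrank_span_eq_card (E.linearIndependent.comp _ hnatinj), Fintype.card_fin]
  · rw [hKη, show (fun i : Fin 3 => E (Fin.castAdd 3 i)) = ⇑E ∘ Fin.castAdd 3 from rfl,
      finrank_span_eq_card (E.linearIndependent.comp _ hcastinj), Fintype.card_fin]
  · rw [eq_top_iff, ← E.span_eq, Submodule.span_le]
    rintro _ ⟨t, rfl⟩
    induction t using Fin.addCases with
    | left i =>
      exact SetLike.le_def.mp le_sup_right (mem_Kof.mpr fun j => hηzero j i)
    | right k =>
      exact SetLike.le_def.mp le_sup_left (mem_Kof.mpr fun j => hξzero j k)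
  · intro t
    induction t using Fin.addCases with
    | left i => exact Or.inr fun j => hηzero j i
    | right k => exact Or.inl fun j => hξzero j k

lemma detForm_congr_of_kernels (ξ η ξ' η' : Fin 3 → (V →ₗ[ℂ] ℂ)) (E : Module.Basis (Fin (3 + 3)) ℂ V)
    (hsum : detForm ξ + detForm η = detForm ξ' + detForm η')
    (h1 : ∀ w : V, (∀ i, ξ' i w = 0) ↔ (∀ i, ξ i w = 0))
    (h2 : ∀ w : V, (∀ i, η' i w = 0) ↔ (∀ i, η i w = 0))
    (hcov : ∀ t, (∀ i, ξ i (E t) = 0) ∨ (∀ i, η i (E t) = 0)) :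
    detForm ξ' = detForm ξ := by
  have key : ∀ m : Fin 3 → Fin (3 + 3),
      detForm ξ' (fun k => E (m k)) = detForm ξ (fun k => E (m k)) := by
    intro m
    by_cases hall : ∀ k, ∀ i, η i (E (m k)) = 0
    · have hη : detForm η (fun k => E (m k)) = 0 :=
        detForm_apply_eq_zero_of_ker _ _ 0 (hall 0)
      have hη' : detForm η' (fun k => E (m k)) = 0 :=
        detForm_apply_eq_zero_of_ker _ _ 0 ((h2 _).mpr (hall 0))
      have hs := congrArg (fun Φ : AlternatingMap ℂ V ℂ (Fin 3) => Φ fun k => E (m k)) hsum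
      simp only [AlternatingMap.add_apply] at hs
      rw [hη, hη', add_zero, add_zero] at hs
      exact hs.symm
    · push_neg at hall
      obtain ⟨k, i0, hi0⟩ := hall
      have hξk : ∀ i, ξ i (E (m k)) = 0 := by
        rcases hcov (m k) with h | h
        · exact h
        · exact absurd (h i0) hi0
      rw [detForm_apply_eq_zero_of_ker ξ _ k hξk,
        detForm_apply_eq_zero_of_ker ξ' _ k ((h1 _).mpr hξk)]
  apply AlternatingMap.coe_multilinearMap_injective
  exact Module.Basis.ext_multilinear (fun _ => E) key

end Main

/-- Uniqueness of the decomposition of a 3-form on a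
6-dimensional complex vector space as a sum of two decomposable 3-forms
whose wedge is nonzero: the unordered pair `{α, β}` is unique. -/
theorem stmt1 (V : Type*) [AddCommGroup V] [Module ℂ V] [FiniteDimensional ℂ V]
    (hdim : Module.finrank ℂ V = 6)
    (Ω α β α' β' : AlternatingMap ℂ V ℂ (Fin 3))
    (hα : IsDecomposable α) (hβ : IsDecomposable β)
    (hα' : IsDecomposable α') (hβ' : IsDecomposable β')
    (hαβ : wedge α β ≠ 0) (hαβ' : wedge α' β' ≠ 0)
    (h : Ω = α + β) (h' : Ω = α' + β') :
    (α' = α ∧ β' = β) ∨ (α' = β ∧ β' = α) := by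
  obtain ⟨ξ, hξ⟩ := isDecomposable_detForm α hα
  obtain ⟨η, hη⟩ := isDecomposable_detForm β hβ
  obtain ⟨ξ', hξ'⟩ := isDecomposable_detForm α' hα'
  obtain ⟨η', hη'⟩ := isDecomposable_detForm β' hβ'
  have hb : LinearIndependent ℂ (Fin.append ξ η) := by
    by_contra hc
    apply hαβ
    rw [hξ, hη, wedge_detForm, detForm_eq_zero_of_not_linearIndependent _ hc]
  have hb' : LinearIndependent ℂ (Fin.append ξ' η') := by
    by_contra hc
    apply hαβ'
    rw [hξ', hη', wedge_detForm, detForm_eq_zero_of_not_linearIndependent _ hc]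
  obtain ⟨E, hpair⟩ := exists_good_basis ξ η hdim hb
  obtain ⟨E', hpair'⟩ := exists_good_basis ξ' η' hdim hb'
  have hΩ : detForm ξ + detForm η = detForm ξ' + detForm η' := by
    rw [← hξ, ← hη, ← hξ', ← hη', ← h, ← h']
  have hchar : ∀ v : V, (∀ i j, ξ i v * η j v = 0) ↔ (∀ i j, ξ' i v * η' j v = 0) := by
    intro v
    rw [← char_lemma ξ η E hpair v, hΩ, char_lemma ξ' η' E' hpair' v]
  have hKor : ∀ (θ φ : Fin 3 → (V →ₗ[ℂ] ℂ)) (v : V),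
      (∀ i j, θ i v * φ j v = 0) ↔ (v ∈ Kof θ ∨ v ∈ Kof φ) := by
    intro θ φ v
    constructor
    · intro hp
      by_cases hθ : ∀ i, θ i v = 0
      · exact Or.inl (mem_Kof.mpr hθ)
      · push_neg at hθ
        obtain ⟨i0, hi0⟩ := hθ
        exact Or.inr (mem_Kof.mpr fun j => (mul_eq_zero.mp (hp i0 j)).resolve_left hi0)
    · rintro (hv | hv) i j
      · rw [mem_Kof.mp hv i, zero_mul]
      · rw [mem_Kof.mp hv j, mul_zero]
  obtain ⟨hfξ, hfη, hsup, hcov⟩ := Kof_facts ξ η E hpair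
  obtain ⟨hfξ', hfη', hsup', hcov'⟩ := Kof_facts ξ' η' E' hpair'
  have hdich1 : Kof ξ' ≤ Kof ξ ∨ Kof ξ' ≤ Kof η :=
    submodule_or _ _ _ fun v hv =>
      (hKor ξ η v).mp ((hchar v).mpr ((hKor ξ' η' v).mpr (Or.inl hv)))
  have hdich2 : Kof η' ≤ Kof ξ ∨ Kof η' ≤ Kof η :=
    submodule_or _ _ _ fun v hv =>
      (hKor ξ η v).mp ((hchar v).mpr ((hKor ξ' η' v).mpr (Or.inr hv)))
  have htop : ∀ (p : Submodule ℂ V), Module.finrank ℂ p = 3 → Kof ξ' ≤ p → Kof η' ≤ p → False := by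
    intro p hp h1 h2
    have : (⊤ : Submodule ℂ V) ≤ p := by
      rw [← hsup']
      exact sup_le h1 h2
    have hpt : p = ⊤ := top_le_iff.mp this
    rw [hpt, finrank_top] at hp
    rw [hdim] at hp
    norm_num at hp
  -- upgrade `≤` to `=` by dimension count
  have hup : ∀ (p q : Submodule ℂ V), Module.finrank ℂ p = 3 → Module.finrank ℂ q = 3 →
      p ≤ q → p = q := by
    intro p q hp hq hle
    exact Submodule.eq_of_le_of_finrank_le hle (by rw [hp, hq])
  rcases hdich1 with h1 | h1
  · -- Kof ξ' = Kof ξ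
    have he1 : Kof ξ' = Kof ξ := hup _ _ hfξ' hfξ h1
    have he2 : Kof η' = Kof η := by
      rcases hdich2 with h2 | h2
      · exact absurd (htop (Kof ξ) hfξ (le_of_eq he1) h2) (fun hf => hf)
      · exact hup _ _ hfη' hfη h2
    left
    have hxe : detForm (V := V) ξ' = detForm ξ := by
      refine detForm_congr_of_kernels ξ η ξ' η' E hΩ ?_ ?_ hcov
      · intro w
        rw [← mem_Kof, ← mem_Kof, he1]
      · intro w
        rw [← mem_Kof, ← mem_Kof, he2]
    have hαα : α' = α := by rw [hξ', hξ, hxe]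
    refine ⟨hαα, ?_⟩
    have hsum2 : α + β = α' + β' := by rw [← h, ← h']
    rw [hαα] at hsum2
    exact (add_left_cancel hsum2).symm
  · -- Kof ξ' = Kof η
    have he1 : Kof ξ' = Kof η := hup _ _ hfξ' hfη h1
    have he2 : Kof η' = Kof ξ := by
      rcases hdich2 with h2 | h2
      · exact hup _ _ hfη' hfξ h2
      · exact absurd (htop (Kof η) hfη (le_of_eq he1) h2) (fun hf => hf)
    right
    have hxe : detForm (V := V) ξ' = detForm η := by
      refine detForm_congr_of_kernels η ξ ξ' η' E ?_ ?_ ?_ ?_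
      · rw [add_comm (detForm η) (detForm ξ)]
        exact hΩ
      · intro w
        rw [← mem_Kof, ← mem_Kof, he1]
      · intro w
        rw [← mem_Kof, ← mem_Kof, he2]
      · intro t
        exact (hcov t).symm
    have hαβ2 : α' = β := by rw [hξ', hη, hxe]
    refine ⟨hαβ2, ?_⟩
    have hsum2 : α + β = α' + β' := by rw [← h, ← h']
    rw [hαβ2, add_comm α β] at hsum2
    exact (add_left_cancel hsum2).symm
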